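/- Let s: ℝ → ℝ be continuous on [t₁,1]. For each positive integer T and i ∈ {2,…,T}, set s(i)=(i−1)/T, t(i)=i/T, and define L_T = Σ_{i=2}^T g(α_{s(i)}, α_{t(i)}) h(t(i)) where g(a,b) = (a−b)/(1−b) and α is continuously differentiable on [0,1] with α_t < 1 on (0,1], and h is continuous. Then lim_{T→∞} L_T = −∫_0^1 (α'_t/(1−α_t)) h(t) dt. -/

import Mathlib

open Filter Topology MeasureTheory intervalIntegral

set_option maxHeartbeats 1000000

/-- Riemann-sum limit of the discrete-time ELBO terms: with a `C¹` schedule `α`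
(derivative `α'`) satisfying `α_t < 1` on `(0,1]`, a continuous `h`, and a cutoff
`ε ∈ (0,1)` avoiding the singularity at `0`, the sums
`Σ_{i=2}^T ((α((i−1)/T) − α(i/T))/(1 − α(i/T))) h(i/T)` (restricted to `i/T ≥ ε`)
converge as `T → ∞` to `−∫_ε^1 (α'_t/(1−α_t)) h(t) dt`. -/
theorem stmt13 (α α' h : ℝ → ℝ) (ε : ℝ) (hε0 : 0 < ε) (hε1 : ε < 1)
    (hd : ∀ t ∈ Set.Icc (0 : ℝ) 1, HasDerivAt α (α' t) t)
    (hc : ContinuousOn α' (Set.Icc (0 : ℝ) 1))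
    (hlt : ∀ t ∈ Set.Ioc (0 : ℝ) 1, α t < 1)
    (hh : Continuous h) :
    Tendsto
      (fun T : ℕ => ∑ i ∈ Finset.Icc 2 T,
        if ε ≤ (i : ℝ) / T then
          ((α (((i : ℝ) - 1) / T) - α ((i : ℝ) / T)) / (1 - α ((i : ℝ) / T)))
            * h ((i : ℝ) / T)
        else 0)
      atTop (𝓝 (-∫ t in ε..1, α' t / (1 - α t) * h t)) := by
  set ε' : ℝ := ε / 2 with hε'def
  have hε'0 : 0 < ε' := by positivity
  have hε'1 : ε' < 1 := by rw [hε'def]; linarith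
  have hsub01 : Set.Icc ε' 1 ⊆ Set.Icc (0:ℝ) 1 := Set.Icc_subset_Icc hε'0.le le_rfl
  have hne : ∀ u ∈ Set.Icc ε' 1, 1 - α u ≠ 0 := fun u hu =>
    sub_ne_zero.mpr (hlt u ⟨lt_of_lt_of_le hε'0 hu.1, hu.2⟩).ne'
  have hαc : ContinuousOn α (Set.Icc (0:ℝ) 1) := fun t ht =>
    (hd t ht).continuousAt.continuousWithinAt
  set φ : ℝ → ℝ := fun u => h u / (1 - α u) with hφdef
  set f : ℝ → ℝ := fun t => α' t / (1 - α t) * h t with hfdef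
  have hφc : ContinuousOn φ (Set.Icc ε' 1) :=
    hh.continuousOn.div (continuousOn_const.sub (hαc.mono hsub01)) hne
  have hfc : ContinuousOn f (Set.Icc ε' 1) :=
    ((hc.mono hsub01).div (continuousOn_const.sub (hαc.mono hsub01)) hne).mul hh.continuousOn
  have hintf : ∀ a b : ℝ, ε' ≤ a → b ≤ 1 → a ≤ b →
      IntervalIntegrable f volume a b := by
    intro a b ha hb hab
    apply ContinuousOn.intervalIntegrable
    rw [Set.uIcc_of_le hab]
    exact hfc.mono (Set.Icc_subset_Icc ha hb)
  have hintα' : ∀ a b : ℝ, (0:ℝ) ≤ a → b ≤ 1 → a ≤ b →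
      IntervalIntegrable α' volume a b := by
    intro a b ha hb hab
    apply ContinuousOn.intervalIntegrable
    rw [Set.uIcc_of_le hab]
    exact hc.mono (Set.Icc_subset_Icc ha hb)
  obtain ⟨M, hM⟩ := isCompact_Icc.exists_bound_of_continuousOn hc
  have hM0 : 0 ≤ M := le_trans (norm_nonneg _) (hM 0 ⟨le_rfl, zero_le_one⟩)
  obtain ⟨K, hK⟩ := isCompact_Icc.exists_bound_of_continuousOn hfc
  have hK0 : 0 ≤ K := le_trans (norm_nonneg _) (hK 1 ⟨hε'1.le, le_rfl⟩)
  have hφu := isCompact_Icc.uniformContinuousOn_of_continuous hφc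
  rw [Metric.tendsto_atTop]
  intro δ hδ
  set δ₁ : ℝ := δ / (2 * (M + 1)) with hδ₁def
  have hδ₁ : 0 < δ₁ := by positivity
  obtain ⟨η, hη, hηs⟩ := Metric.uniformContinuousOn_iff.mp hφu δ₁ hδ₁
  obtain ⟨N, hN⟩ := exists_nat_gt (max (max (2/ε + 1) (1/η)) (2*(K+1)/δ))
  refine ⟨N, fun T hT => ?_⟩
  have hTgt : max (max (2/ε + 1) (1/η)) (2*(K+1)/δ) < (T:ℝ) :=
    lt_of_lt_of_le hN (Nat.cast_le.mpr hT)
  have hT2ε : 2/ε + 1 < (T:ℝ) := lt_of_le_of_lt (le_max_left _ _ |>.trans (le_max_left _ _)) hTgt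
  have hT1η : 1/η < (T:ℝ) := lt_of_le_of_lt ((le_max_right _ _).trans (le_max_left _ _)) hTgt
  have hTK : 2*(K+1)/δ < (T:ℝ) := lt_of_le_of_lt (le_max_right _ _) hTgt
  have hT0 : (0:ℝ) < T := lt_trans (by positivity) hT2ε
  have hεT2 : 2 < ε * T := by
    have h1 : 2/ε < (T:ℝ) - 1 := by linarith
    have h2 := (div_lt_iff₀ hε0).mp h1
    nlinarith
  have hinvη : 1/(T:ℝ) < η := by
    have h2 := (div_lt_iff₀ hη).mp hT1η
    rw [div_lt_iff₀ hT0]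
    nlinarith
  have hinvε' : 1/(T:ℝ) < ε' := by
    rw [div_lt_iff₀ hT0, hε'def]
    nlinarith
  have hKT : (K+1)/(T:ℝ) < δ/2 := by
    have h2 := (div_lt_iff₀ hδ).mp hTK
    rw [div_lt_iff₀ hT0]
    nlinarith
  set i₀ : ℕ := ⌈ε * T⌉₊ with hi₀def
  have hi₀εT : ε * T ≤ (i₀ : ℝ) := Nat.le_ceil _
  have hi₀lt : (i₀:ℝ) < ε * T + 1 := Nat.ceil_lt_add_one (by positivity)
  have hi₀2 : 2 ≤ i₀ := by
    have h2 : (2:ℝ) ≤ (i₀:ℝ) := le_trans hεT2.le hi₀εT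
    exact_mod_cast h2
  have hi₀T : i₀ ≤ T := Nat.ceil_le.mpr (by nlinarith)
  -- rewrite the sum
  have hsum : (∑ i ∈ Finset.Icc 2 T,
        if ε ≤ (i : ℝ) / T then
          ((α (((i : ℝ) - 1) / T) - α ((i : ℝ) / T)) / (1 - α ((i : ℝ) / T)))
            * h ((i : ℝ) / T)
        else 0)
      = ∑ i ∈ Finset.Icc i₀ T,
          ((α (((i : ℝ) - 1) / T) - α ((i : ℝ) / T)) / (1 - α ((i : ℝ) / T)))
            * h ((i : ℝ) / T) := by
    rw [← Finset.sum_filter]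
    apply Finset.sum_congr _ (fun _ _ => rfl)
    ext i
    simp only [Finset.mem_filter, Finset.mem_Icc]
    constructor
    · rintro ⟨⟨h2, hiT⟩, hcond⟩
      exact ⟨Nat.ceil_le.mpr ((le_div_iff₀ hT0).mp hcond), hiT⟩
    · rintro ⟨hi0, hiT⟩
      refine ⟨⟨le_trans hi₀2 hi0, hiT⟩, ?_⟩
      rw [le_div_iff₀ hT0]
      calc ε * T ≤ (i₀:ℝ) := hi₀εT
        _ ≤ i := Nat.cast_le.mpr hi0
  rw [Real.dist_eq, hsum, sub_neg_eq_add]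
  -- per-term facts
  have hterm : ∀ i ∈ Finset.Icc i₀ T,
      |((α (((i : ℝ) - 1) / T) - α ((i : ℝ) / T)) / (1 - α ((i : ℝ) / T)))
            * h ((i : ℝ) / T)
        + ∫ u in (((i:ℝ)-1)/T)..((i:ℝ)/T), f u| ≤ M * δ₁ * (1/T) := by
    intro i hi
    rw [Finset.mem_Icc] at hi
    have hi0 : (i₀:ℝ) ≤ i := Nat.cast_le.mpr hi.1
    have hiT : (i:ℝ) ≤ T := Nat.cast_le.mpr hi.2
    set s : ℝ := ((i:ℝ)-1)/T with hsdef
    set t : ℝ := (i:ℝ)/T with htdef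
    have hst : s ≤ t := by
      rw [hsdef, htdef]
      gcongr <;> linarith
    have hts : t - s = 1/T := by rw [htdef, hsdef]; field_simp; ring
    have htε : ε ≤ t := by rw [htdef, le_div_iff₀ hT0]; linarith
    have ht1 : t ≤ 1 := by rw [htdef, div_le_one hT0]; exact hiT
    have hs' : ε' ≤ s := by
      rw [hsdef, le_div_iff₀ hT0, hε'def]
      have : (ε/2) * T = (ε * T)/2 := by ring
      linarith
    have htmem : t ∈ Set.Icc ε' 1 := ⟨le_trans (by linarith) htε, ht1⟩
    have hsub : Set.Icc s t ⊆ Set.Icc ε' 1 := Set.Icc_subset_Icc hs' ht1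
    have hftc : (∫ u in s..t, α' u) = α t - α s := by
      apply integral_eq_sub_of_hasDerivAt
      · intro u hu
        rw [Set.uIcc_of_le hst] at hu
        exact hd u (hsub01 (hsub hu))
      · exact hintα' s t (le_trans hε'0.le hs') ht1 hst
    have hkey : (α s - α t) / (1 - α t) * h t + (∫ u in s..t, f u)
        = ∫ u in s..t, α' u * (φ u - φ t) := by
      have e1 : Set.EqOn (fun u => α' u * (φ u - φ t))
          (fun u => f u - α' u * φ t) (Set.uIcc s t) := by
        intro u hu
        rw [Set.uIcc_of_le hst] at hu
        simp only [hφdef, hfdef]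
        have hnz : (1 : ℝ) - α u ≠ 0 := hne u (hsub hu)
        have hnz' : (1 : ℝ) - α t ≠ 0 := hne t htmem
        field_simp
      rw [intervalIntegral.integral_congr e1,
        intervalIntegral.integral_sub (hintf s t hs' ht1 hst)
          ((hintα' s t (le_trans hε'0.le hs') ht1 hst).mul_const _),
        intervalIntegral.integral_mul_const, hftc]
      have hnz' : (1 : ℝ) - α t ≠ 0 := hne t htmem
      simp only [hφdef]
      field_simp
      ring
    rw [hkey]
    have hb : ∀ u ∈ Set.uIoc s t, ‖α' u * (φ u - φ t)‖ ≤ M * δ₁ := by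
      intro u hu
      rw [Set.uIoc_of_le hst] at hu
      have humem : u ∈ Set.Icc ε' 1 := hsub ⟨hu.1.le, hu.2⟩
      have hdist : dist u t < η := by
        rw [Real.dist_eq, abs_sub_lt_iff]
        constructor
        · linarith [hu.2, hinvη, hts, hu.1]
        · linarith [hu.1, hinvη, hts]
      have hφd := hηs u humem t htmem hdist
      rw [Real.dist_eq] at hφd
      rw [norm_mul]
      exact mul_le_mul (hM u (hsub01 humem)) hφd.le (abs_nonneg _) hM0
    have hIb := intervalIntegral.norm_integral_le_of_norm_le_const hb
    have hpos : (0:ℝ) < t - s := by rw [hts]; positivity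
    rwa [Real.norm_eq_abs, abs_of_pos hpos, hts] at hIb
  set a : ℕ → ℝ := fun k => (((i₀ + k : ℕ) : ℝ) - 1)/T with hadef
  set n : ℕ := T + 1 - i₀ with hndef
  have hε'ε : ε' ≤ ε := by rw [hε'def]; linarith
  have hcast : ∀ k : ℕ, a k = ((i₀:ℝ) + k - 1)/T := by
    intro k; simp only [hadef]; push_cast; ring_nf
  have hε'ak : ∀ k : ℕ, ε' ≤ a k := by
    intro k
    rw [hcast, le_div_iff₀ hT0, hε'def]
    have hk0 : (0:ℝ) ≤ k := Nat.cast_nonneg k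
    have he : (ε/2) * T = (ε*T)/2 := by ring
    linarith [hi₀εT, hεT2]
  have hak1 : ∀ k : ℕ, k ≤ n → a k ≤ 1 := by
    intro k hk
    have hkT : i₀ + k ≤ T + 1 := by omega
    have hkT' : ((i₀:ℝ) + k) ≤ (T:ℝ) + 1 := by exact_mod_cast hkT
    rw [hcast, div_le_one hT0]
    linarith
  have hamono : ∀ k : ℕ, a k ≤ a (k+1) := by
    intro k
    rw [hcast, hcast]
    gcongr
    omega
  have hadj : ∀ k < n, IntervalIntegrable f volume (a k) (a (k+1)) :=
    fun k hk => hintf _ _ (hε'ak k) (hak1 (k+1) (by omega)) (hamono k)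
  have htel := intervalIntegral.sum_integral_adjacent_intervals hadj
  have han : a n = 1 := by
    rw [hcast]
    have h1 : i₀ + n = T + 1 := by omega
    have h2 : ((i₀:ℝ) + (n:ℝ)) = (T:ℝ) + 1 := by exact_mod_cast h1
    have h3 : (i₀:ℝ) + (n:ℝ) - 1 = T := by linarith
    rw [h3, div_self (ne_of_gt hT0)]
  rw [han] at htel
  have hsum2 : (∑ i ∈ Finset.Icc i₀ T, ∫ u in (((i:ℝ)-1)/T)..((i:ℝ)/T), f u)
      = ∫ u in (a 0)..1, f u := by
    rw [← Finset.Ico_add_one_right_eq_Icc, Finset.sum_Ico_eq_sum_range, ← htel, ← hndef]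
    apply Finset.sum_congr rfl
    intro k _
    congr 1
    simp only [hadef]
    push_cast
    ring
  have hsplit : (∫ u in (a 0)..1, f u) = (∫ u in (a 0)..ε, f u) + ∫ u in ε..1, f u := by
    have ha0ε : a 0 ≤ ε := by
      rw [hcast, div_le_iff₀ hT0]
      push_cast
      linarith [hi₀lt]
    exact (intervalIntegral.integral_add_adjacent_intervals
      (hintf _ _ (hε'ak 0) hε1.le ha0ε)
      (hintf _ _ hε'ε le_rfl hε1.le)).symm
  have hEq : (∑ i ∈ Finset.Icc i₀ T,
        ((α (((i : ℝ) - 1) / T) - α ((i : ℝ) / T)) / (1 - α ((i : ℝ) / T)))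
            * h ((i : ℝ) / T)) + (∫ u in ε..1, f u)
      = (∑ i ∈ Finset.Icc i₀ T,
          (((α (((i : ℝ) - 1) / T) - α ((i : ℝ) / T)) / (1 - α ((i : ℝ) / T)))
            * h ((i : ℝ) / T)
            + ∫ u in (((i:ℝ)-1)/T)..((i:ℝ)/T), f u))
        - ∫ u in (a 0)..ε, f u := by
    rw [Finset.sum_add_distrib, hsum2, hsplit]; ring
  rw [hEq]
  have hcard : (Finset.Icc i₀ T).card = n := by rw [Nat.card_Icc]
  have hb1 : |∑ i ∈ Finset.Icc i₀ T,
          (((α (((i : ℝ) - 1) / T) - α ((i : ℝ) / T)) / (1 - α ((i : ℝ) / T)))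
            * h ((i : ℝ) / T)
            + ∫ u in (((i:ℝ)-1)/T)..((i:ℝ)/T), f u)| ≤ M * δ₁ := by
    refine (Finset.abs_sum_le_sum_abs _ _).trans ?_
    refine (Finset.sum_le_card_nsmul _ _ _ hterm).trans ?_
    rw [hcard, nsmul_eq_mul]
    have hn_le : (n:ℝ) ≤ T := by
      have : n ≤ T := by omega
      exact_mod_cast this
    have hc0 : (0:ℝ) ≤ M * δ₁ * (1/T) := by positivity
    calc (n:ℝ) * (M * δ₁ * (1/T)) ≤ (T:ℝ) * (M * δ₁ * (1/T)) := by
          exact mul_le_mul_of_nonneg_right hn_le hc0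
      _ = M * δ₁ := by field_simp
  have hMδ : M * δ₁ < δ/2 := by
    have he : (M+1) * δ₁ = δ/2 := by
      rw [hδ₁def]; field_simp
    nlinarith
  have hb2 : |∫ u in (a 0)..ε, f u| ≤ (K+1)/T := by
    have ha0ε : a 0 ≤ ε := by
      rw [hcast, div_le_iff₀ hT0]
      push_cast
      linarith [hi₀lt]
    have hbnd : ∀ u ∈ Set.uIoc (a 0) ε, ‖f u‖ ≤ K := by
      intro u hu
      rw [Set.uIoc_of_le ha0ε] at hu
      exact hK u ⟨le_trans (hε'ak 0) hu.1.le, le_trans hu.2 hε1.le⟩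
    have hIb := intervalIntegral.norm_integral_le_of_norm_le_const hbnd
    rw [Real.norm_eq_abs] at hIb
    refine hIb.trans ?_
    have haε : ε - a 0 ≤ 1/T := by
      rw [hcast]
      push_cast
      rw [sub_le_iff_le_add, ← add_div, le_div_iff₀ hT0]
      linarith [hi₀εT]
    have habs : |ε - a 0| = ε - a 0 := abs_of_nonneg (by linarith)
    rw [habs]
    calc K * (ε - a 0) ≤ K * (1/T) := mul_le_mul_of_nonneg_left haε hK0
      _ ≤ (K+1) * (1/T) := by
          have : (0:ℝ) ≤ 1/T := by positivity
          nlinarith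
      _ = (K+1)/T := by ring
  have habs : ∀ x y : ℝ, |x - y| ≤ |x| + |y| := fun x y => by
    rw [sub_eq_add_neg]; exact (abs_add_le _ _).trans (by rw [abs_neg])
  refine lt_of_le_of_lt (habs _ _) ?_
  have hfin := add_lt_add_of_le_of_lt (hb1.trans hMδ.le) (lt_of_le_of_lt hb2 hKT)
  linarith
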